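/- Let H be a bialgebra over a field k and A a commutative right H-comodule algebra. If M is a projective object in the category M_A^H of relative Hopf modules, then M is projective as an A-module. -/

import Mathlib

open TensorProduct

universe u

/-- A commutative right `H`-comodule algebra: a commutative `k`-algebra `A` together with
a coassociative counital coaction `ρ : A → A ⊗ H` which is an algebra map. -/
structure ComodAlg (k H A : Type u) [CommRing k] [Ring H] [Bialgebra k H]
    [CommRing A] [Algebra k A] : Type u where
  ρ : A →ₐ[k] A ⊗[k] H
  counit_comp : ∀ a : A,
    (TensorProduct.rid k A) ((LinearMap.lTensor A (Coalgebra.counit (R := k) (A := H))) (ρ a)) = a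
  coassoc : ∀ a : A,
    (LinearMap.lTensor A (Coalgebra.comul (R := k) (A := H))) (ρ a)
      = (TensorProduct.assoc k A H H) ((LinearMap.rTensor H ρ.toLinearMap) (ρ a))

namespace ComodAlg

variable {k H A : Type u} [CommRing k] [Ring H] [Bialgebra k H]
  [CommRing A] [Algebra k A] (c : ComodAlg k H A)

/-- The subset of coinvariant elements `B = A^{co H}`. -/
def coinvSet : Set A := {a : A | c.ρ a = a ⊗ₜ[k] 1}

/-- The coinvariants `B = A^{co H}` as a subalgebra of `A`. -/
def coinvAlg : Subalgebra k A where
  carrier := c.coinvSet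
  mul_mem' {a} {b} ha hb := by
    simp only [coinvSet, Set.mem_setOf_eq] at *
    rw [map_mul, ha, hb, Algebra.TensorProduct.tmul_mul_tmul, mul_one]
  add_mem' {a} {b} ha hb := by
    simp only [coinvSet, Set.mem_setOf_eq] at *
    rw [map_add, ha, hb, ← add_tmul]
  algebraMap_mem' r := by
    simp only [coinvSet, Set.mem_setOf_eq, AlgHom.commutes,
      Algebra.TensorProduct.algebraMap_apply]

end ComodAlg

namespace ComodAlg

variable {k H A : Type u} [CommRing k] [Ring H] [Bialgebra k H]
  [CommRing A] [Algebra k A]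

variable (k A H) in
/-- The action of `A ⊗ H` on `M ⊗ H` given by `(a ⊗ h) • (m ⊗ h') = (a • m) ⊗ (h h')`,
used to express the compatibility condition of relative Hopf modules. -/
noncomputable def actAH (M : Type u) [AddCommGroup M] [Module k M] [Module A M]
    [IsScalarTower k A M] : (A ⊗[k] H) →ₗ[k] (M ⊗[k] H) →ₗ[k] (M ⊗[k] H) :=
  (TensorProduct.homTensorHomMap (RingHom.id k) M H M H) ∘ₗ
    (TensorProduct.map ((Algebra.lsmul k k M : A →ₐ[k] Module.End k M).toLinearMap)
      (LinearMap.mul k H))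

/-- A relative Hopf module structure on an `A`-module `M`: a right `H`-coaction
compatible with the `A`-action, `ρ_M(m a) = m₍₀₎ a₍₀₎ ⊗ m₍₁₎ a₍₁₎`. -/
structure HopfMod (c : ComodAlg k H A) (M : Type u) [AddCommGroup M] [Module k M]
    [Module A M] [IsScalarTower k A M] where
  coact : M →ₗ[k] M ⊗[k] H
  smul_compat : ∀ (a : A) (m : M), coact (a • m) = actAH k H A M (c.ρ a) (coact m)
  counit_comp : ∀ m : M,
    (TensorProduct.rid k M) ((LinearMap.lTensor M (Coalgebra.counit (R := k) (A := H)))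
      (coact m)) = m
  coassoc : ∀ m : M,
    (LinearMap.lTensor M (Coalgebra.comul (R := k) (A := H))) (coact m)
      = (TensorProduct.assoc k M H H) ((LinearMap.rTensor H coact) (coact m))

variable {c : ComodAlg k H A}

/-- A morphism of relative Hopf modules is an `A`-linear map which is `H`-colinear. -/
def IsColinear {M N : Type u} [AddCommGroup M] [Module k M] [Module A M]
    [IsScalarTower k A M] [AddCommGroup N] [Module k N] [Module A N] [IsScalarTower k A N]
    (hm : HopfMod c M) (hn : HopfMod c N) (f : M →ₗ[A] N) : Prop :=
  ∀ m : M, hn.coact (f m) = (LinearMap.rTensor H (f.restrictScalars k)) (hm.coact m)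

/-- The regular relative Hopf module `A` itself. -/
noncomputable def regular (c : ComodAlg k H A) : HopfMod c A where
  coact := c.ρ.toLinearMap
  smul_compat := fun a m => by
    simp only [AlgHom.toLinearMap_apply, smul_eq_mul, map_mul, actAH]
    generalize c.ρ a = x; generalize c.ρ m = y
    induction x with
    | zero => simp
    | add u v hu hv => simp_all [add_mul]
    | tmul a' h' =>
        induction y with
        | zero => simp
        | add u v hu hv => simp_all [mul_add]
        | tmul b' g' =>
            simp [Algebra.TensorProduct.tmul_mul_tmul, TensorProduct.homTensorHomMap_apply,
              smul_eq_mul]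
  counit_comp := c.counit_comp
  coassoc := c.coassoc

end ComodAlg

namespace ComodAlg

variable {k H A : Type u} [CommRing k] [Ring H] [Bialgebra k H]
  [CommRing A] [Algebra k A]

/-- `M` is a projective object in the category `M_A^H` of relative Hopf modules: every
morphism from `M` to the codomain of an epimorphism of relative Hopf modules lifts. -/
def IsProjectiveObject (c : ComodAlg k H A) (M : Type u) [AddCommGroup M] [Module k M]
    [Module A M] [IsScalarTower k A M] (hm : HopfMod c M) : Prop :=
  ∀ (P Q : Type u) [AddCommGroup P] [Module k P] [Module A P] [IsScalarTower k A P]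
    [AddCommGroup Q] [Module k Q] [Module A Q] [IsScalarTower k A Q]
    (hp : HopfMod c P) (hq : HopfMod c Q) (p : P →ₗ[A] Q),
    Function.Surjective p → IsColinear hp hq p →
    ∀ g : M →ₗ[A] Q, IsColinear hm hq g →
      ∃ h : M →ₗ[A] P, IsColinear hm hp h ∧ p ∘ₗ h = g

/-- `H` is cosemisimple: there is a (left) integral `φ` on `H` (i.e. an element of `H^*`
with `Σ h₍₁₎ φ(h₍₂₎) = φ(h) 1`) such that `φ(1) = 1`. -/
def IsCosemisimple (k H : Type u) [CommRing k] [Ring H] [Bialgebra k H] : Prop :=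
  ∃ φ : H →ₗ[k] k, φ 1 = 1 ∧
    ∀ h : H, (TensorProduct.rid k H)
        ((LinearMap.lTensor H φ) (Coalgebra.comul (R := k) (A := H) h)) = φ h • (1 : H)

end ComodAlg


section Aux
open ComodAlg TensorProduct

variable {k H A : Type u} [CommRing k] [Ring H] [Bialgebra k H]
  [CommRing A] [Algebra k A]

variable {M : Type u} [AddCommGroup M] [Module k M] [Module A M] [IsScalarTower k A M]

variable (k H A M) in
/-- `(a ⊗ h) ⊗ (m ⊗ g) ↦ (a ⊗ m) ⊗ (h * g)`. -/
noncomputable def auxMul : (A ⊗[k] H) ⊗[k] (M ⊗[k] H) →ₗ[k] (A ⊗[k] M) ⊗[k] H :=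
  LinearMap.lTensor (A ⊗[k] M) (LinearMap.mul' k H) ∘ₗ
    (TensorProduct.tensorTensorTensorComm k A H M H).toLinearMap

@[simp] lemma auxMul_tmul (a : A) (h : H) (m : M) (g : H) :
    auxMul k H A M ((a ⊗ₜ[k] h) ⊗ₜ[k] (m ⊗ₜ[k] g)) = (a ⊗ₜ[k] m) ⊗ₜ[k] (h * g) := by
  simp [auxMul]

@[simp] lemma actAH_tmul {N : Type u} [AddCommGroup N] [Module k N] [Module A N]
    [IsScalarTower k A N] (a : A) (h : H) (n : N) (g : H) :
    actAH k H A N (a ⊗ₜ[k] h) (n ⊗ₜ[k] g) = (a • n) ⊗ₜ[k] (h * g) := by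
  simp [actAH, TensorProduct.homTensorHomMap_apply]

lemma auxMul_mul (w y : A ⊗[k] H) (z : M ⊗[k] H) :
    auxMul k H A M ((w * y) ⊗ₜ[k] z) = actAH k H A (A ⊗[k] M) w (auxMul k H A M (y ⊗ₜ[k] z)) := by
  induction w with
  | zero => simp [TensorProduct.zero_tmul]
  | add u v hu hv => simp only [add_mul, TensorProduct.add_tmul, map_add,
      LinearMap.add_apply, hu, hv]
  | tmul b bh =>
    induction y with
    | zero => simp [TensorProduct.zero_tmul]
    | add u v hu hv => simp only [mul_add, TensorProduct.add_tmul, map_add, hu, hv]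
    | tmul a ah =>
      induction z with
      | zero => simp
      | add u v hu hv => simp only [TensorProduct.tmul_add, map_add, hu, hv]
      | tmul m mh =>
        simp [Algebra.TensorProduct.tmul_mul_tmul, TensorProduct.smul_tmul',
          smul_eq_mul, mul_assoc]

lemma auxMul_counit (y : A ⊗[k] H) (z : M ⊗[k] H) :
    (TensorProduct.rid k (A ⊗[k] M))
      ((LinearMap.lTensor (A ⊗[k] M) (Coalgebra.counit (R := k) (A := H)))
        (auxMul k H A M (y ⊗ₜ[k] z)))
    = (TensorProduct.rid k A) ((LinearMap.lTensor A (Coalgebra.counit (R := k) (A := H))) y)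
        ⊗ₜ[k] (TensorProduct.rid k M)
          ((LinearMap.lTensor M (Coalgebra.counit (R := k) (A := H))) z) := by
  induction y with
  | zero => simp [TensorProduct.zero_tmul]
  | add u v hu hv => simp only [TensorProduct.add_tmul, map_add, hu, hv, TensorProduct.add_tmul]
  | tmul a h =>
    induction z with
    | zero => simp
    | add u v hu hv => simp only [TensorProduct.tmul_add, map_add, hu, hv, TensorProduct.tmul_add]
    | tmul m g =>
      simp [Bialgebra.counit_mul, TensorProduct.smul_tmul', TensorProduct.tmul_smul,
        smul_smul, mul_comm]

variable (k H A M) in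
/-- `(a ⊗ (h₁⊗h₂)) ⊗ (m ⊗ (g₁⊗g₂)) ↦ (a ⊗ m) ⊗ (h₁g₁ ⊗ h₂g₂)`. -/
noncomputable def auxT :
    (A ⊗[k] (H ⊗[k] H)) ⊗[k] (M ⊗[k] (H ⊗[k] H)) →ₗ[k] (A ⊗[k] M) ⊗[k] (H ⊗[k] H) :=
  LinearMap.lTensor (A ⊗[k] M) (LinearMap.mul' k (H ⊗[k] H)) ∘ₗ
    (TensorProduct.tensorTensorTensorComm k A (H ⊗[k] H) M (H ⊗[k] H)).toLinearMap

variable (k H A M) in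
noncomputable def auxS :
    ((A ⊗[k] H) ⊗[k] H) ⊗[k] ((M ⊗[k] H) ⊗[k] H) →ₗ[k] (A ⊗[k] M) ⊗[k] (H ⊗[k] H) :=
  (TensorProduct.assoc k (A ⊗[k] M) H H).toLinearMap ∘ₗ
    (TensorProduct.map (auxMul k H A M) (LinearMap.mul' k H)) ∘ₗ
      (TensorProduct.tensorTensorTensorComm k (A ⊗[k] H) H (M ⊗[k] H) H).toLinearMap

lemma auxMul_comul (y : A ⊗[k] H) (z : M ⊗[k] H) :
    (LinearMap.lTensor (A ⊗[k] M) (Coalgebra.comul (R := k) (A := H)))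
      (auxMul k H A M (y ⊗ₜ[k] z))
    = auxT k H A M (((LinearMap.lTensor A (Coalgebra.comul (R := k) (A := H))) y)
        ⊗ₜ[k] ((LinearMap.lTensor M (Coalgebra.comul (R := k) (A := H))) z)) := by
  induction y with
  | zero => simp [TensorProduct.zero_tmul]
  | add u v hu hv => simp only [TensorProduct.add_tmul, map_add, hu, hv]
  | tmul a h =>
    induction z with
    | zero => simp
    | add u v hu hv => simp only [TensorProduct.tmul_add, map_add, hu, hv]
    | tmul m g =>
      simp [auxT, Bialgebra.comul_mul]

set_option maxHeartbeats 1000000 in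
set_option synthInstance.maxHeartbeats 400000 in
lemma auxS_assoc (u : (A ⊗[k] H) ⊗[k] H) (v : (M ⊗[k] H) ⊗[k] H) :
    auxT k H A M (((TensorProduct.assoc k A H H) u) ⊗ₜ[k] ((TensorProduct.assoc k M H H) v))
      = auxS k H A M (u ⊗ₜ[k] v) := by
  induction u with
  | zero => simp [TensorProduct.zero_tmul]
  | add u1 u2 hu1 hu2 => simp only [TensorProduct.add_tmul, map_add, hu1, hu2]
  | tmul w h2 =>
    induction w with
    | zero => simp [TensorProduct.zero_tmul]
    | add w1 w2 hw1 hw2 => simp only [TensorProduct.add_tmul, map_add, hw1, hw2]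
    | tmul a h1 =>
      induction v with
      | zero => simp
      | add v1 v2 hv1 hv2 => simp only [TensorProduct.tmul_add, map_add, hv1, hv2]
      | tmul w' g2 =>
        induction w' with
        | zero => simp [TensorProduct.zero_tmul]
        | add w1 w2 hw1 hw2 => simp only [TensorProduct.add_tmul, TensorProduct.tmul_add,
            map_add, hw1, hw2]
        | tmul m g1 =>
          simp [auxT, auxS, Algebra.TensorProduct.tmul_mul_tmul]

lemma auxMul_rTensor_delta (c : ComodAlg k H A) (hme : HopfMod c M)
    (y : A ⊗[k] H) (z : M ⊗[k] H) :
    (TensorProduct.assoc k (A ⊗[k] M) H H)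
      ((LinearMap.rTensor H (auxMul k H A M ∘ₗ TensorProduct.map c.ρ.toLinearMap hme.coact))
        (auxMul k H A M (y ⊗ₜ[k] z)))
    = auxS k H A M (((LinearMap.rTensor H c.ρ.toLinearMap) y)
        ⊗ₜ[k] ((LinearMap.rTensor H hme.coact) z)) := by
  induction y with
  | zero => simp [TensorProduct.zero_tmul]
  | add u v hu hv => simp only [TensorProduct.add_tmul, map_add, hu, hv]
  | tmul a h =>
    induction z with
    | zero => simp
    | add u v hu hv => simp only [TensorProduct.tmul_add, map_add, hu, hv]
    | tmul m g =>
      simp [auxS]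

/-- The free relative Hopf module `A ⊗ M` with coaction `a ⊗ m ↦ a₀ ⊗ m₀ ⊗ a₁ m₁`. -/
noncomputable def freeHopf (c : ComodAlg k H A) (hme : HopfMod c M) :
    HopfMod c (A ⊗[k] M) where
  coact := auxMul k H A M ∘ₗ TensorProduct.map c.ρ.toLinearMap hme.coact
  smul_compat := fun b x => by
    induction x with
    | zero => simp
    | add u v hu hv => simp only [smul_add, map_add, hu, hv]
    | tmul a m =>
      have hb : b • (a ⊗ₜ[k] m) = (b * a) ⊗ₜ[k] m := by
        rw [TensorProduct.smul_tmul', smul_eq_mul]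
      rw [hb]
      simp only [LinearMap.comp_apply, TensorProduct.map_tmul, AlgHom.toLinearMap_apply,
        map_mul]
      exact auxMul_mul _ _ _
  counit_comp := fun x => by
    induction x with
    | zero => simp
    | add u v hu hv => simp only [map_add, hu, hv]
    | tmul a m =>
      simp only [LinearMap.comp_apply, TensorProduct.map_tmul, AlgHom.toLinearMap_apply]
      rw [auxMul_counit, c.counit_comp, hme.counit_comp]
  coassoc := fun x => by
    induction x with
    | zero => simp
    | add u v hu hv => simp only [map_add, hu, hv]
    | tmul a m =>
      simp only [LinearMap.comp_apply, TensorProduct.map_tmul, AlgHom.toLinearMap_apply]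
      rw [auxMul_comul, c.coassoc, hme.coassoc, auxS_assoc,
        ← auxMul_rTensor_delta c hme]

lemma auxMul_act (p : (A ⊗[k] M) →ₗ[A] M) (hp : ∀ (a : A) (m : M), p (a ⊗ₜ[k] m) = a • m)
    (y : A ⊗[k] H) (z : M ⊗[k] H) :
    (LinearMap.rTensor H (p.restrictScalars k)) (auxMul k H A M (y ⊗ₜ[k] z))
      = actAH k H A M y z := by
  induction y with
  | zero => simp [TensorProduct.zero_tmul]
  | add u v hu hv => simp only [TensorProduct.add_tmul, map_add, LinearMap.add_apply, hu, hv]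
  | tmul a h =>
    induction z with
    | zero => simp
    | add u v hu hv => simp only [TensorProduct.tmul_add, map_add, hu, hv]
    | tmul m g =>
      simp [hp]

end Aux

open ComodAlg in
/-- over a field `k`, the forgetful functor `M_A^H → M_A` preserves
projectives: if `M` is a projective object in the category of relative Hopf modules, then
`M` is projective as an `A`-module. -/
theorem forget_preserves_projectives
    {k H A : Type u} [Field k] [Ring H] [Bialgebra k H]
    [CommRing A] [Algebra k A] (c : ComodAlg k H A)
    (M : Type u) [AddCommGroup M] [Module k M] [Module A M] [IsScalarTower k A M]
    (hm : HopfMod c M) (hproj : IsProjectiveObject c M hm) :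
    Module.Projective A M := by
  classical
  let hp : HopfMod c (A ⊗[k] M) := freeHopf c hm
  let p : (A ⊗[k] M) →ₗ[A] M := (LinearMap.id (R := k) (M := M)).liftBaseChange A
  have hptmul : ∀ (a : A) (m : M), p (a ⊗ₜ[k] m) = a • m := fun a m => by
    simp [p, LinearMap.liftBaseChange_tmul]
  have hsurj : Function.Surjective p := fun m => ⟨(1 : A) ⊗ₜ[k] m, by simp [hptmul]⟩
  have hcolp : IsColinear hp hm p := by
    intro x
    induction x with
    | zero => simp
    | add u v hu hv => simp only [map_add, hu, hv]
    | tmul a m =>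
      rw [hptmul, hm.smul_compat]
      show _ = (LinearMap.rTensor H (p.restrictScalars k))
        ((auxMul k H A M ∘ₗ TensorProduct.map c.ρ.toLinearMap hm.coact) (a ⊗ₜ[k] m))
      simp only [LinearMap.comp_apply, TensorProduct.map_tmul, AlgHom.toLinearMap_apply]
      rw [auxMul_act p hptmul]
  have hcolid : IsColinear hm hm (LinearMap.id (R := A) (M := M)) := by
    intro m
    rw [show ((LinearMap.id : M →ₗ[A] M).restrictScalars k) = LinearMap.id from rfl,
      LinearMap.rTensor_id, LinearMap.id_apply, LinearMap.id_apply]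
  obtain ⟨h, _, hph⟩ := hproj (A ⊗[k] M) M hp hm p hsurj hcolp LinearMap.id hcolid
  exact Module.Projective.of_split h p hph
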